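/- For every n ∈ ℙ, ∑_{γ ∈ Δ_n, Dmaj(γ) even} (-1)^{ℓ_B(γ)} q^{Dmaj(γ)} = ∑_{γ ∈ D_n, Dmaj(γ) even} (-1)^{ℓ_D(γ)} q^{Dmaj(γ)}, and ∑_{γ ∈ Δ_n, Dmaj(γ) odd} (-1)^{ℓ_B(γ)} q^{Dmaj(γ)} = -∑_{γ ∈ D_n, Dmaj(γ) odd} (-1)^{ℓ_D(γ)} q^{Dmaj(γ)}, where D_n is identified with Δ_n via γ ↦ [γ(1),...,γ(n-1),|γ(n)|] and Dmaj on D_n is defined through this bijection. -/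

import Mathlib

open Finset Polynomial

/-- The hyperoctahedral group `B n`, modeled as pairs (permutation, sign vector):
the signed permutation with window `β(i) = ±(σ(i)+1)`. -/
abbrev Bgrp (n : ℕ) := Equiv.Perm (Fin n) × (Fin n → Bool)

/-- The window entry `β(i)` (a nonzero integer). -/
def wdw {n : ℕ} (β : Bgrp n) (i : Fin n) : ℤ :=
  (if β.2 i then -1 else 1) * ((β.1 i : ℤ) + 1)

/-- Window entry at a `ℕ` position (0-based), `0` out of range. -/
def wdwN {n : ℕ} (β : Bgrp n) (i : ℕ) : ℤ :=
  if h : i < n then wdw β ⟨i, h⟩ else 0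

/-- Number of inversions of the window. -/
def invB {n : ℕ} (β : Bgrp n) : ℕ :=
  ((univ : Finset (Fin n × Fin n)).filter
    (fun p => p.1 < p.2 ∧ wdw β p.2 < wdw β p.1)).card

/-- The set of positions with negative entries. -/
def NegB {n : ℕ} (β : Bgrp n) : Finset (Fin n) :=
  univ.filter (fun i => wdw β i < 0)

def N1 {n : ℕ} (β : Bgrp n) : ℕ := (NegB β).card

def N2 {n : ℕ} (β : Bgrp n) : ℕ :=
  ((univ : Finset (Fin n × Fin n)).filter
    (fun p => p.1 < p.2 ∧ wdw β p.1 + wdw β p.2 < 0)).card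

/-- The order `-1 ≺ -2 ≺ ⋯ ≺ -n ≺ 1 ≺ 2 ≺ ⋯ ≺ n` on nonzero integers. -/
def precLt (a b : ℤ) : Prop :=
  (a < 0 ∧ b < 0 ∧ b < a) ∨ (a < 0 ∧ 0 < b) ∨ (0 < a ∧ 0 < b ∧ a < b)

instance (a b : ℤ) : Decidable (precLt a b) := by unfold precLt; infer_instance

/-- Descent set of the window, with respect to `≺` (0-based positions). -/
def DesB {n : ℕ} (β : Bgrp n) : Finset ℕ :=
  (range (n-1)).filter (fun i => precLt (wdwN β (i+1)) (wdwN β i))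

/-- Major index: sum of the (1-based) descent positions. -/
def majB {n : ℕ} (β : Bgrp n) : ℕ := ∑ i ∈ DesB β, (i+1)

/-- Flag-major index. -/
def fmaj {n : ℕ} (β : Bgrp n) : ℕ := 2 * majB β + N1 β

/-- Group multiplication (composition of signed permutations). -/
def bmul {n : ℕ} (β γ : Bgrp n) : Bgrp n :=
  (β.1 * γ.1, fun i => xor (γ.2 i) (β.2 (γ.1 i)))

/-- The identity signed permutation. -/
def bone (n : ℕ) : Bgrp n := (1, fun _ => false)

/-- The Coxeter generators `s_0, s_1, …, s_{n-1}` of `B n`. -/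
def BGens (n : ℕ) : Set (Bgrp n) :=
  { b | (∃ h : 0 < n, b = ((1 : Equiv.Perm (Fin n)), fun j => decide (j = (⟨0, h⟩ : Fin n)))) ∨
        (∃ (i : ℕ) (h : i + 1 < n),
          b = (Equiv.swap ⟨i, Nat.lt_of_succ_lt h⟩ ⟨i+1, h⟩, fun _ => false)) }

/-- Minimal length of an expression of `β` as a product of the generators of `B n`. -/
noncomputable def lenB {n : ℕ} (β : Bgrp n) : ℕ :=
  sInf {k | ∃ l : List (Bgrp n), l.length = k ∧ (∀ g ∈ l, g ∈ BGens n) ∧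
    l.foldr bmul (bone n) = β}

/-- The Coxeter generators `s_0^D, s_1, …, s_{n-1}` of `D n`. -/
def DGens (n : ℕ) : Set (Bgrp n) :=
  { b | (∃ h : 1 < n,
          b = (Equiv.swap ⟨0, Nat.lt_of_succ_lt h⟩ ⟨1, h⟩, fun (j : Fin n) => decide ((j : ℕ) < 2))) ∨
        (∃ (i : ℕ) (h : i + 1 < n),
          b = (Equiv.swap ⟨i, Nat.lt_of_succ_lt h⟩ ⟨i+1, h⟩, fun _ => false)) }

/-- Minimal length of an expression as a product of the generators of `D n`. -/
noncomputable def lenD {n : ℕ} (β : Bgrp n) : ℕ :=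
  sInf {k | ∃ l : List (Bgrp n), l.length = k ∧ (∀ g ∈ l, g ∈ DGens n) ∧
    l.foldr bmul (bone n) = β}

/-- The even-signed permutation group `D n` as a finset of `B n`. -/
def Dgrp (n : ℕ) : Finset (Bgrp n) := univ.filter (fun γ => Even (N1 γ))

/-- `Δ_n = {γ ∈ B_n : γ(n) > 0}`. -/
def DeltaSet (n : ℕ) : Finset (Bgrp n) := univ.filter (fun γ => 0 < wdwN γ (n-1))

/-- `|γ|_n`: replace the last window entry by its absolute value. -/
def absLast {n : ℕ} (γ : Bgrp n) : Bgrp n :=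
  (γ.1, fun i => if (i : ℕ) = n - 1 then false else γ.2 i)

/-- The `D`-major index. -/
def Dmaj {n : ℕ} (γ : Bgrp n) : ℕ := fmaj (absLast γ)

/-- `-β`: negate all window entries. -/
def negB {n : ℕ} (β : Bgrp n) : Bgrp n := (β.1, fun i => !β.2 i)

/-- Number of inversions of a permutation of `Fin n`. -/
def invS {n : ℕ} (σ : Equiv.Perm (Fin n)) : ℕ :=
  ((univ : Finset (Fin n × Fin n)).filter
    (fun p => p.1 < p.2 ∧ σ p.2 < σ p.1)).card

/-- Major index of a permutation of `Fin n` (usual order). -/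
def majS {n : ℕ} (σ : Equiv.Perm (Fin n)) : ℕ :=
  ∑ i ∈ (range (n-1)).filter
      (fun i => ∀ h : i + 1 < n, σ ⟨i+1, h⟩ < σ ⟨i, Nat.lt_of_succ_lt h⟩), (i+1)

/-- The `q`-analogue `[m]_q = 1 + q + ⋯ + q^{m-1}`, evaluated at a polynomial `q`. -/
noncomputable def qpoly (m : ℕ) (q : Polynomial ℤ) : Polynomial ℤ := ∑ k ∈ range m, q ^ k

section AuxLemmas

variable {n : ℕ}

lemma bmul_assoc (a b c : Bgrp n) : bmul (bmul a b) c = bmul a (bmul b c) := by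
  simp only [bmul, Prod.mk.injEq]
  refine ⟨(mul_assoc _ _ _), ?_⟩
  funext i
  simp [Equiv.Perm.mul_apply, Bool.xor_assoc]

lemma bmul_bone (b : Bgrp n) : bmul b (bone n) = b := by
  simp [bmul, bone]

lemma bone_bmul (b : Bgrp n) : bmul (bone n) b = b := by
  simp [bmul, bone]

/-- `β` is a product of elements of `S`. -/
def Gen (S : Set (Bgrp n)) (β : Bgrp n) : Prop :=
  ∃ l : List (Bgrp n), (∀ g ∈ l, g ∈ S) ∧ l.foldr bmul (bone n) = β

lemma foldr_bmul (l : List (Bgrp n)) (x : Bgrp n) :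
    l.foldr bmul x = bmul (l.foldr bmul (bone n)) x := by
  induction l with
  | nil => simp [bone_bmul]
  | cons g l ih => simp [List.foldr_cons, ih, bmul_assoc]

lemma Gen.one {S : Set (Bgrp n)} : Gen S (bone n) := ⟨[], by simp, rfl⟩

lemma Gen.mul {S : Set (Bgrp n)} {β γ : Bgrp n} (hβ : Gen S β) (hγ : Gen S γ) :
    Gen S (bmul β γ) := by
  obtain ⟨l, hl, rfl⟩ := hβ
  obtain ⟨l', hl', rfl⟩ := hγ
  refine ⟨l ++ l', ?_, ?_⟩
  · intro g hg
    rcases List.mem_append.1 hg with h | h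
    exacts [hl g h, hl' g h]
  · rw [List.foldr_append, foldr_bmul]

lemma Gen.of_mem {S : Set (Bgrp n)} {g : Bgrp n} (hg : g ∈ S) : Gen S g :=
  ⟨[g], by simpa using hg, by simp [bmul_bone]⟩

lemma bmul_perm (σ τ : Equiv.Perm (Fin n)) :
    bmul (σ, fun _ => false) (τ, fun _ => false) = (σ * τ, fun _ => false) := by
  simp [bmul]

/-- Generation of pure permutations by adjacent transpositions. -/
lemma gen_perm {S : Set (Bgrp n)}
    (hS : ∀ (i : ℕ) (h : i + 1 < n),
      ((Equiv.swap ⟨i, Nat.lt_of_succ_lt h⟩ ⟨i+1, h⟩, fun _ => false) : Bgrp n) ∈ S)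
    (σ : Equiv.Perm (Fin n)) : Gen S ((σ, fun _ => false) : Bgrp n) := by
  rcases n with _ | m
  · have : σ = 1 := Subsingleton.elim _ _
    subst this
    exact Gen.one
  · have hσ : σ ∈ Submonoid.closure
        (Set.range fun i : Fin m => Equiv.swap i.castSucc i.succ) := by
      rw [Equiv.Perm.mclosure_swap_castSucc_succ]; trivial
    obtain ⟨l, hl, hprod⟩ := Submonoid.exists_list_of_mem_closure hσ
    subst hprod
    clear hσ
    induction l with
    | nil => simpa [bone] using (Gen.one : Gen S (bone (m+1)))
    | cons τ l ih =>
      have hτ : τ ∈ Set.range fun i : Fin m => Equiv.swap i.castSucc i.succ :=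
        hl τ (by simp)
      obtain ⟨i, rfl⟩ := hτ
      rw [List.prod_cons, ← bmul_perm]
      refine Gen.mul (Gen.of_mem ?_) (ih fun g hg => hl g (by simp [hg]))
      have h2 : (i : ℕ) + 1 < m + 1 := by omega
      have e1 : i.castSucc = (⟨i, Nat.lt_of_succ_lt h2⟩ : Fin (m+1)) := Fin.ext (by simp)
      have e2 : i.succ = (⟨(i:ℕ)+1, h2⟩ : Fin (m+1)) := Fin.ext (by simp [Fin.val_succ])
      show ((Equiv.swap i.castSucc i.succ, fun _ => false) : Bgrp (m+1)) ∈ S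
      rw [e1, e2]
      exact hS i h2

lemma conj_eq (σ : Equiv.Perm (Fin n)) (b : Fin n → Bool) :
    bmul (bmul ((σ, fun _ => false) : Bgrp n) (1, b)) (σ⁻¹, fun _ => false) =
      (1, fun i => b (σ⁻¹ i)) := by
  simp [bmul]

end AuxLemmas
section AuxGen

variable {n : ℕ}

lemma N1_eq (β : Bgrp n) : N1 β = (univ.filter (fun i => β.2 i = true)).card := by
  unfold N1 NegB
  congr 1
  apply Finset.filter_congr
  intro i _
  have h : (0:ℤ) < ((β.1 i : ℕ) : ℤ) + 1 := by positivity
  unfold wdw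
  cases hb : β.2 i <;> simp <;> omega

lemma bmul_split (β : Bgrp n) : bmul (β.1, fun _ => false) (1, β.2) = β := by
  simp [bmul]

/-- Sign flip at a single position is generated by `BGens`. -/
lemma genB_single (i : Fin n) :
    Gen (BGens n) ((1, fun j => decide (j = i)) : Bgrp n) := by
  have hn : 0 < n := i.pos
  set z : Fin n := ⟨0, hn⟩
  have hs0 : ((1, fun j => decide (j = z)) : Bgrp n) ∈ BGens n := Or.inl ⟨hn, rfl⟩
  have hswaps : ∀ (k : ℕ) (h : k + 1 < n),
      ((Equiv.swap ⟨k, Nat.lt_of_succ_lt h⟩ ⟨k+1, h⟩, fun _ => false) : Bgrp n) ∈ BGens n :=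
    fun k h => Or.inr ⟨k, h, rfl⟩
  set σ : Equiv.Perm (Fin n) := Equiv.swap z i
  have key := conj_eq σ (fun j => decide (j = z))
  have h2 : (fun j => decide (σ⁻¹ j = z)) = fun j => decide (j = i) := by
    funext j
    have hinv : σ⁻¹ = σ := Equiv.swap_inv z i
    have : σ⁻¹ j = z ↔ j = i := by
      rw [hinv]
      constructor
      · intro h
        have h2 := congrArg σ h
        rwa [Equiv.swap_apply_self, Equiv.swap_apply_left] at h2
      · intro h
        rw [h]
        exact Equiv.swap_apply_right z i
    exact decide_eq_decide.mpr this
  rw [h2] at key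
  rw [← key]
  exact Gen.mul (Gen.mul (gen_perm hswaps σ) (Gen.of_mem hs0)) (gen_perm hswaps σ⁻¹)

/-- Any sign vector is generated by `BGens` (together with the identity permutation). -/
lemma genB_signs (b : Fin n → Bool) : Gen (BGens n) ((1, b) : Bgrp n) := by
  have main : ∀ s : Finset (Fin n),
      Gen (BGens n) ((1, fun j => decide (j ∈ s)) : Bgrp n) := by
    intro s
    induction s using Finset.induction with
    | empty => simpa [bone] using (Gen.one : Gen (BGens n) (bone n))
    | @insert a s' ha ih =>
      have key : bmul ((1, fun j => decide (j = a)) : Bgrp n) (1, fun j => decide (j ∈ s')) =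
          (1, fun j => decide (j ∈ insert a s')) := by
        simp only [bmul, mul_one, Prod.mk.injEq, Equiv.Perm.one_apply]
        refine ⟨trivial, ?_⟩
        funext j
        by_cases hj : j = a <;> simp [hj, ha, Finset.mem_insert]
      rw [← key]
      exact Gen.mul (genB_single a) ih
  have : b = fun j => decide (j ∈ univ.filter (fun i => b i = true)) := by
    funext j; simp
  rw [this]
  exact main _

lemma genB (β : Bgrp n) : Gen (BGens n) β := by
  rw [← bmul_split β]
  exact Gen.mul (gen_perm (fun k h => Or.inr ⟨k, h, rfl⟩) β.1) (genB_signs β.2)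

end AuxGen
section AuxGenD

variable {n : ℕ}

lemma dswaps : ∀ (k : ℕ) (h : k + 1 < n),
    ((Equiv.swap ⟨k, Nat.lt_of_succ_lt h⟩ ⟨k+1, h⟩, fun _ => false) : Bgrp n) ∈ DGens n :=
  fun k h => Or.inr ⟨k, h, rfl⟩

lemma fin_lt_two_iff (h1 : 1 < n) (m : Fin n) :
    ((m : ℕ) < 2) ↔ (m = ⟨0, Nat.lt_of_succ_lt h1⟩ ∨ m = ⟨1, h1⟩) := by
  rw [Fin.ext_iff, Fin.ext_iff]
  show ((m : ℕ) < 2) ↔ ((m : ℕ) = 0 ∨ (m : ℕ) = 1)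
  omega

/-- The double flip at positions 0,1 is generated by `DGens`. -/
lemma genD_f01 (h1 : 1 < n) :
    Gen (DGens n) ((1, fun k => decide ((k : ℕ) < 2)) : Bgrp n) := by
  set z0 : Fin n := ⟨0, Nat.lt_of_succ_lt h1⟩
  set z1 : Fin n := ⟨1, h1⟩
  have hz : z0 ≠ z1 := by simp [z0, z1, Fin.ext_iff]
  have hs0 : ((Equiv.swap z0 z1, fun j => decide ((j : ℕ) < 2)) : Bgrp n) ∈ DGens n :=
    Or.inl ⟨h1, rfl⟩
  have hsw : ((Equiv.swap z0 z1, fun _ => false) : Bgrp n) ∈ DGens n :=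
    Or.inr ⟨0, h1, rfl⟩
  have key : bmul ((Equiv.swap z0 z1, fun j => decide ((j : ℕ) < 2)) : Bgrp n)
      (Equiv.swap z0 z1, fun _ => false) = ((1, fun k => decide ((k : ℕ) < 2)) : Bgrp n) := by
    simp only [bmul, Prod.mk.injEq]
    constructor
    · exact Equiv.swap_mul_self z0 z1
    · funext k
      simp only [Bool.false_xor]
      congr 1
      rw [eq_iff_iff, fin_lt_two_iff h1 ((Equiv.swap z0 z1) k), fin_lt_two_iff h1 k]
      rw [Equiv.swap_apply_eq_iff, Equiv.swap_apply_eq_iff, Equiv.swap_apply_left,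
        Equiv.swap_apply_right]
      exact or_comm
  rw [← key]
  exact Gen.mul (Gen.of_mem hs0) (Gen.of_mem hsw)

/-- For distinct `i j`, there is a permutation sending `0 ↦ i`, `1 ↦ j`. -/
lemma exists_perm_pair (h1 : 1 < n) (i j : Fin n) (hij : i ≠ j) :
    ∃ σ : Equiv.Perm (Fin n), σ ⟨0, Nat.lt_of_succ_lt h1⟩ = i ∧ σ ⟨1, h1⟩ = j := by
  set z0 : Fin n := ⟨0, Nat.lt_of_succ_lt h1⟩
  set z1 : Fin n := ⟨1, h1⟩
  have hz : z0 ≠ z1 := by simp [z0, z1, Fin.ext_iff]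
  set τ : Equiv.Perm (Fin n) := Equiv.swap z0 i
  set j' : Fin n := τ j
  have hj' : j' ≠ z0 := by
    intro h
    have := congrArg τ h
    rw [Equiv.swap_apply_self] at this
    simp only [τ, Equiv.swap_apply_left] at this
    exact hij this.symm
  refine ⟨τ * Equiv.swap z1 j', ?_, ?_⟩
  · show τ (Equiv.swap z1 j' z0) = i
    rw [Equiv.swap_apply_of_ne_of_ne hz (Ne.symm hj')]
    exact Equiv.swap_apply_left z0 i
  · show τ (Equiv.swap z1 j' z1) = j
    rw [Equiv.swap_apply_left]
    show τ (τ j) = j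
    exact Equiv.swap_apply_self z0 i j

/-- Double flips at arbitrary distinct positions are generated by `DGens`. -/
lemma genD_pair (i j : Fin n) (hij : i ≠ j) :
    Gen (DGens n) ((1, fun k => decide (k = i ∨ k = j)) : Bgrp n) := by
  have h1 : 1 < n := by
    by_contra h
    push_neg at h
    exact hij (Fin.ext (by omega))
  obtain ⟨σ, hσ0, hσ1⟩ := exists_perm_pair h1 i j hij
  have key := conj_eq σ (fun k => decide ((k : ℕ) < 2))
  have h2 : (fun k => decide ((σ⁻¹ k : ℕ) < 2)) = fun k => decide (k = i ∨ k = j) := by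
    funext k
    congr 1
    rw [eq_iff_iff, fin_lt_two_iff h1 (σ⁻¹ k)]
    constructor
    · rintro (h | h)
      · left
        have h3 := congrArg σ h
        rwa [(by simp : ∀ x, σ (σ⁻¹ x) = x), hσ0] at h3
      · right
        have h3 := congrArg σ h
        rwa [(by simp : ∀ x, σ (σ⁻¹ x) = x), hσ1] at h3
    · rintro (rfl | rfl)
      · left
        rw [← hσ0, (by simp : ∀ x, σ⁻¹ (σ x) = x)]
      · right
        rw [← hσ1, (by simp : ∀ x, σ⁻¹ (σ x) = x)]
  rw [h2] at key
  rw [← key]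
  exact Gen.mul (Gen.mul (gen_perm dswaps σ) (genD_f01 h1)) (gen_perm dswaps σ⁻¹)

/-- Sign vectors with an even number of flips are generated by `DGens`. -/
lemma genD_signs_aux : ∀ s : Finset (Fin n), Even s.card →
    Gen (DGens n) ((1, fun k => decide (k ∈ s)) : Bgrp n) := by
  intro s
  induction s using Finset.strongInduction with
  | _ s ih =>
    intro hs
    rcases s.eq_empty_or_nonempty with rfl | ⟨i, hi⟩
    · simpa [bone] using (Gen.one : Gen (DGens n) (bone n))
    · have hcard : 2 ≤ s.card := by
        have h1 : 0 < s.card := Finset.card_pos.mpr ⟨i, hi⟩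
        rcases hs with ⟨c, hc⟩
        omega
      have hne : (s.erase i).Nonempty := by
        rw [← Finset.card_pos, Finset.card_erase_of_mem hi]
        omega
      obtain ⟨j, hj⟩ := hne
      have hji : j ≠ i := (Finset.mem_erase.1 hj).1
      have hjs : j ∈ s := (Finset.mem_erase.1 hj).2
      set t : Finset (Fin n) := (s.erase i).erase j with ht
      have htsub : t ⊂ s := by
        refine Finset.ssubset_iff_of_subset ?_ |>.mpr ⟨i, hi, ?_⟩
        · exact (Finset.erase_subset _ _).trans (Finset.erase_subset _ _)
        · simp [t]
      have htcard : t.card = s.card - 2 := by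
        rw [ht, Finset.card_erase_of_mem hj, Finset.card_erase_of_mem hi]
        omega
      have hteven : Even t.card := by
        rcases hs with ⟨c, hc⟩
        refine ⟨c - 1, ?_⟩
        omega
      have key : bmul ((1, fun k => decide (k = i ∨ k = j)) : Bgrp n)
          (1, fun k => decide (k ∈ t)) = (1, fun k => decide (k ∈ s)) := by
        simp only [bmul, mul_one, Prod.mk.injEq, Equiv.Perm.one_apply]
        refine ⟨trivial, ?_⟩
        funext k
        by_cases hk1 : k = i
        · subst hk1
          simp [t, hi, hji.symm]
        · by_cases hk2 : k = j
          · subst hk2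
            simp [t, hjs, hji, hk1]
          · simp [t, hk1, hk2]
      rw [← key]
      exact Gen.mul (genD_pair i j (Ne.symm hji)) (ih t htsub hteven)

lemma genD (γ : Bgrp n) (hγ : Even (N1 γ)) : Gen (DGens n) γ := by
  rw [← bmul_split γ]
  refine Gen.mul (gen_perm dswaps γ.1) ?_
  rw [N1_eq] at hγ
  have hb : γ.2 = fun k => decide (k ∈ univ.filter (fun i => γ.2 i = true)) := by
    funext k; simp
  rw [hb]
  exact genD_signs_aux _ (by simpa using hγ)

end AuxGenD
section AuxSign

variable {n : ℕ}

/-- The sign character of `B n`. -/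
def epsB (β : Bgrp n) : ℤ :=
  (Equiv.Perm.sign β.1 : ℤ) * ∏ i, (if β.2 i then (-1 : ℤ) else 1)

/-- The sign character of `D n`. -/
def epsD (β : Bgrp n) : ℤ := (Equiv.Perm.sign β.1 : ℤ)

lemma prod_sign_eq (b : Fin n → Bool) :
    (∏ i, (if b i then (-1 : ℤ) else 1)) =
      (-1 : ℤ) ^ (univ.filter (fun i => b i = true)).card := by
  rw [← Finset.prod_filter_mul_prod_filter_not univ (fun i => b i = true)]
  rw [Finset.prod_congr rfl (fun i hi => by
    simp only [Finset.mem_filter] at hi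
    rw [if_pos hi.2]), Finset.prod_const]
  rw [Finset.prod_congr rfl (fun i hi => by
    simp only [Finset.mem_filter] at hi
    rw [if_neg (by simpa using hi.2)]), Finset.prod_const, one_pow, mul_one]

lemma epsB_bmul (β γ : Bgrp n) : epsB (bmul β γ) = epsB β * epsB γ := by
  unfold epsB bmul
  simp only
  rw [map_mul]
  push_cast
  have : (∏ i, (if xor (γ.2 i) (β.2 (γ.1 i)) then (-1 : ℤ) else 1)) =
      (∏ i, (if γ.2 i then (-1 : ℤ) else 1)) * ∏ i, (if β.2 (γ.1 i) then (-1 : ℤ) else 1) := by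
    rw [← Finset.prod_mul_distrib]
    refine Finset.prod_congr rfl fun i _ => ?_
    cases hγ : γ.2 i <;> cases hβ : β.2 (γ.1 i) <;> simp [hγ, hβ]
  rw [this, Equiv.prod_comp γ.1 (fun i => if β.2 i then (-1 : ℤ) else 1)]
  ring

lemma epsD_bmul (β γ : Bgrp n) : epsD (bmul β γ) = epsD β * epsD γ := by
  unfold epsD bmul
  simp only
  rw [map_mul]
  push_cast
  ring

lemma epsB_gen {g : Bgrp n} (hg : g ∈ BGens n) : epsB g = -1 := by
  rcases hg with ⟨h, rfl⟩ | ⟨i, h, rfl⟩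
  · unfold epsB
    simp only [map_one, Units.val_one, one_mul]
    rw [prod_sign_eq]
    have : (univ.filter (fun j => decide (j = (⟨0, h⟩ : Fin n)) = true)).card = 1 := by
      rw [show (univ.filter (fun j => decide (j = (⟨0, h⟩ : Fin n)) = true)) = {⟨0, h⟩} from ?_]
      · simp
      · ext j; simp
    rw [this, pow_one]
  · unfold epsB
    have hne : (⟨i, Nat.lt_of_succ_lt h⟩ : Fin n) ≠ ⟨i+1, h⟩ := by simp [Fin.ext_iff]
    rw [Equiv.Perm.sign_swap hne]
    simp

lemma epsD_gen {g : Bgrp n} (hg : g ∈ DGens n) : epsD g = -1 := by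
  rcases hg with ⟨h, rfl⟩ | ⟨i, h, rfl⟩
  · unfold epsD
    have hne : (⟨0, Nat.lt_of_succ_lt h⟩ : Fin n) ≠ ⟨1, h⟩ := by simp [Fin.ext_iff]
    rw [Equiv.Perm.sign_swap hne]
    simp
  · unfold epsD
    have hne : (⟨i, Nat.lt_of_succ_lt h⟩ : Fin n) ≠ ⟨i+1, h⟩ := by simp [Fin.ext_iff]
    rw [Equiv.Perm.sign_swap hne]
    simp

lemma eps_foldr (eps : Bgrp n → ℤ) (S : Set (Bgrp n))
    (hone : eps (bone n) = 1)
    (hmul : ∀ β γ, eps (bmul β γ) = eps β * eps γ)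
    (hgen : ∀ g ∈ S, eps g = -1) :
    ∀ l : List (Bgrp n), (∀ g ∈ l, g ∈ S) →
      eps (l.foldr bmul (bone n)) = (-1 : ℤ) ^ l.length := by
  intro l
  induction l with
  | nil => simpa using hone
  | cons g l ih =>
    intro hl
    rw [List.foldr_cons, hmul, hgen g (hl g (by simp)), ih (fun x hx => hl x (by simp [hx]))]
    simp [pow_succ]
    try ring

lemma epsB_bone : epsB (bone n) = 1 := by simp [epsB, bone]

lemma epsD_bone : epsD (bone n) = 1 := by simp [epsD, bone]

lemma lenB_sign (β : Bgrp n) : (-1 : ℤ) ^ lenB β = epsB β := by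
  obtain ⟨l, hl, hfold⟩ := genB β
  have hne : {k | ∃ l : List (Bgrp n), l.length = k ∧ (∀ g ∈ l, g ∈ BGens n) ∧
      l.foldr bmul (bone n) = β}.Nonempty := ⟨l.length, l, rfl, hl, hfold⟩
  obtain ⟨l', hlen, hmem', hfold'⟩ := Nat.sInf_mem hne
  have h1 : lenB β = l'.length := hlen.symm
  rw [h1, ← eps_foldr epsB (BGens n) epsB_bone epsB_bmul (fun g hg => epsB_gen hg) l' hmem',
    hfold']

lemma lenD_sign (γ : Bgrp n) (hγ : Even (N1 γ)) : (-1 : ℤ) ^ lenD γ = epsD γ := by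
  obtain ⟨l, hl, hfold⟩ := genD γ hγ
  have hne : {k | ∃ l : List (Bgrp n), l.length = k ∧ (∀ g ∈ l, g ∈ DGens n) ∧
      l.foldr bmul (bone n) = γ}.Nonempty := ⟨l.length, l, rfl, hl, hfold⟩
  obtain ⟨l', hlen, hmem', hfold'⟩ := Nat.sInf_mem hne
  have h1 : lenD γ = l'.length := hlen.symm
  rw [h1, ← eps_foldr epsD (DGens n) epsD_bone epsD_bmul (fun g hg => epsD_gen hg) l' hmem',
    hfold']

end AuxSign
section AuxMain

variable {n : ℕ}

/-- Count of flipped signs. -/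
def cnt {n : ℕ} (b : Fin n → Bool) : ℕ := (univ.filter (fun i => b i = true)).card

lemma cnt_mask (hn : 0 < n) (b : Fin n → Bool) (v : Bool) :
    cnt (fun i : Fin n => if (i : ℕ) = n-1 then v else b i)
      + (if b ⟨n-1, by omega⟩ then 1 else 0)
    = cnt b + (if v then 1 else 0) := by
  set L : Fin n := ⟨n-1, by omega⟩ with hLdef
  unfold cnt
  rw [Finset.card_filter, Finset.card_filter]
  rw [← Finset.sum_erase_add univ _ (Finset.mem_univ L),
      ← Finset.sum_erase_add univ (fun i => if b i = true then 1 else 0) (Finset.mem_univ L)]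
  have hcong : ∀ i ∈ univ.erase L,
      (if (if (i : ℕ) = n-1 then v else b i) = true then 1 else 0)
        = (if b i = true then 1 else 0) := by
    intro i hi
    have hiv : (i : ℕ) ≠ n-1 := by
      intro h
      exact (Finset.mem_erase.1 hi).1 (Fin.ext h)
    rw [if_neg hiv]
  rw [Finset.sum_congr rfl hcong]
  have hL : ((L : Fin n) : ℕ) = n - 1 := rfl
  have h2 : (if (if (L : ℕ) = n-1 then v else b L) = true then 1 else 0)
      = (if v = true then 1 else 0) := by rw [if_pos hL]
  rw [h2]
  omega

lemma delta_last_false (hn : 0 < n) (δ : Bgrp n) (h : 0 < wdwN δ (n-1)) :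
    δ.2 ⟨n-1, by omega⟩ = false := by
  unfold wdwN at h
  rw [dif_pos (by omega : n - 1 < n)] at h
  unfold wdw at h
  cases hb : δ.2 ⟨n-1, by omega⟩
  · rfl
  · exfalso
    rw [hb] at h
    simp only [if_true] at h
    have : (0 : ℤ) ≤ ((δ.1 ⟨n-1, by omega⟩ : ℕ) : ℤ) := by positivity
    omega

/-- The inverse of `absLast` on `D n`: set the last sign so that the total is even. -/
def fixL {n : ℕ} (δ : Bgrp n) : Bgrp n :=
  (δ.1, fun i => if (i : ℕ) = n-1 then !decide (Even (cnt δ.2)) else δ.2 i)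

lemma absLast_snd (γ : Bgrp n) :
    (absLast γ).2 = fun i : Fin n => if (i : ℕ) = n-1 then false else γ.2 i := rfl

lemma absLast_idem (γ : Bgrp n) : absLast (absLast γ) = absLast γ := by
  unfold absLast
  refine Prod.ext rfl ?_
  funext i
  by_cases hi : (i : ℕ) = n-1 <;> simp [hi]

lemma dmaj_absLast (γ : Bgrp n) : Dmaj (absLast γ) = Dmaj γ := by
  unfold Dmaj
  rw [absLast_idem]

lemma absLast_eq_self (hn : 0 < n) (δ : Bgrp n) (h : δ.2 ⟨n-1, by omega⟩ = false) :
    absLast δ = δ := by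
  refine Prod.ext rfl ?_
  funext i
  show (if (i : ℕ) = n-1 then false else δ.2 i) = δ.2 i
  by_cases hi : (i : ℕ) = n-1
  · rw [if_pos hi]
    have : i = ⟨n-1, by omega⟩ := Fin.ext hi
    rw [this, h]
  · rw [if_neg hi]

lemma even_dmaj_iff (γ : Bgrp n) : (Even (Dmaj γ) ↔ Even (cnt (absLast γ).2)) := by
  unfold Dmaj fmaj
  rw [N1_eq]
  show Even (2 * majB (absLast γ) + (univ.filter (fun i => (absLast γ).2 i = true)).card) ↔ _
  unfold cnt
  rw [Nat.even_iff, Nat.even_iff]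
  omega

lemma absLast_fixL (hn : 0 < n) (δ : Bgrp n) (h : δ.2 ⟨n-1, by omega⟩ = false) :
    absLast (fixL δ) = δ := by
  refine Prod.ext rfl ?_
  funext i
  show (if (i : ℕ) = n-1 then false
      else (if (i : ℕ) = n-1 then !decide (Even (cnt δ.2)) else δ.2 i)) = δ.2 i
  by_cases hi : (i : ℕ) = n-1
  · rw [if_pos hi]
    have : i = ⟨n-1, by omega⟩ := Fin.ext hi
    rw [this, h]
  · rw [if_neg hi, if_neg hi]

lemma fixL_even (hn : 0 < n) (δ : Bgrp n) (h : δ.2 ⟨n-1, by omega⟩ = false) :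
    Even (N1 (fixL δ)) := by
  rw [N1_eq]
  have hm := cnt_mask hn δ.2 (!decide (Even (cnt δ.2)))
  rw [h] at hm
  simp only [Bool.false_eq_true, if_false, add_zero] at hm
  show Even (cnt (fixL δ).2)
  have hfix : (fixL δ).2 = fun i : Fin n =>
      if (i : ℕ) = n-1 then !decide (Even (cnt δ.2)) else δ.2 i := rfl
  rw [hfix]
  by_cases he : Even (cnt δ.2)
  · rw [show (!decide (Even (cnt δ.2))) = false from by simp [he]] at hm ⊢
    simp only [Bool.false_eq_true, if_false, add_zero] at hm
    rw [Nat.even_iff] at he ⊢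
    omega
  · rw [show (!decide (Even (cnt δ.2))) = true from by simp [he]] at hm ⊢
    simp only [if_true] at hm
    rw [Nat.even_iff] at he ⊢
    push_neg at he
    omega

lemma fixL_absLast (hn : 0 < n) (γ : Bgrp n) (hγ : Even (N1 γ)) :
    fixL (absLast γ) = γ := by
  rw [N1_eq] at hγ
  have hc : Even (cnt γ.2) := hγ
  have hm := cnt_mask hn γ.2 false
  simp only [Bool.false_eq_true, if_false, add_zero] at hm
  have hmask : cnt (absLast γ).2 + (if γ.2 ⟨n-1, by omega⟩ then 1 else 0) = cnt γ.2 := hm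
  refine Prod.ext rfl ?_
  funext i
  show (if (i : ℕ) = n-1 then !decide (Even (cnt (absLast γ).2)) else (absLast γ).2 i) = γ.2 i
  by_cases hi : (i : ℕ) = n-1
  · rw [if_pos hi]
    have hiL : i = ⟨n-1, by omega⟩ := Fin.ext hi
    rw [hiL]
    cases hb : γ.2 ⟨n-1, by omega⟩
    · rw [hb] at hmask
      simp only [Bool.false_eq_true, if_false, add_zero] at hmask
      have he : Even (cnt (absLast γ).2) := by
        rw [Nat.even_iff] at hc ⊢
        omega
      simp [he]
    · rw [hb] at hmask
      simp only [if_true] at hmask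
      have he : ¬ Even (cnt (absLast γ).2) := by
        rw [Nat.even_iff] at hc ⊢
        omega
      simp [he]
  · rw [if_neg hi]
    show (if (i : ℕ) = n-1 then false else γ.2 i) = γ.2 i
    rw [if_neg hi]

lemma epsB_absLast (γ : Bgrp n) :
    epsB (absLast γ) = epsD γ * (-1 : ℤ) ^ cnt (absLast γ).2 := by
  unfold epsB epsD
  rw [prod_sign_eq]
  rfl

lemma sign_even (hn : 0 < n) (γ : Bgrp n) (hγ : Even (N1 γ)) (h : Even (Dmaj γ)) :
    (-1 : ℤ) ^ lenB (absLast γ) = (-1 : ℤ) ^ lenD γ := by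
  rw [lenB_sign, lenD_sign γ hγ, epsB_absLast]
  rw [(even_dmaj_iff γ).1 h |>.neg_one_pow, mul_one]

lemma sign_odd (hn : 0 < n) (γ : Bgrp n) (hγ : Even (N1 γ)) (h : Odd (Dmaj γ)) :
    (-1 : ℤ) ^ lenB (absLast γ) = -(-1 : ℤ) ^ lenD γ := by
  rw [lenB_sign, lenD_sign γ hγ, epsB_absLast]
  have : Odd (cnt (absLast γ).2) := by
    rw [← Nat.not_even_iff_odd] at h ⊢
    exact fun hc => h ((even_dmaj_iff γ).2 hc)
  rw [this.neg_one_pow]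
  ring

lemma polyneg (k : ℕ) : ((-1 : Polynomial ℤ)) ^ k = C ((-1 : ℤ) ^ k) := by
  rw [map_pow, map_neg, map_one]

end AuxMain
/-- The even parts of the signed `Dmaj` generating functions over `Δ_n` (with `ℓ_B`)
and over `D_n` (with `ℓ_D`) agree; the odd parts are negatives of each other. -/

theorem stmt18 (n : ℕ) (hn : 0 < n) :
    (∑ γ ∈ (DeltaSet n).filter (fun γ => Even (Dmaj γ)),
        (-1 : Polynomial ℤ) ^ lenB γ * X ^ Dmaj γ =
      ∑ γ ∈ (Dgrp n).filter (fun γ => Even (Dmaj γ)),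
        (-1 : Polynomial ℤ) ^ lenD γ * X ^ Dmaj γ) ∧
    (∑ γ ∈ (DeltaSet n).filter (fun γ => Odd (Dmaj γ)),
        (-1 : Polynomial ℤ) ^ lenB γ * X ^ Dmaj γ =
      -∑ γ ∈ (Dgrp n).filter (fun γ => Odd (Dmaj γ)),
        (-1 : Polynomial ℤ) ^ lenD γ * X ^ Dmaj γ) := by
  have hΔ : ∀ δ : Bgrp n, δ ∈ DeltaSet n → δ.2 ⟨n-1, by omega⟩ = false := by
    intro δ hδ
    rw [DeltaSet, Finset.mem_filter] at hδ
    exact delta_last_false hn δ hδ.2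
  have hDg : ∀ γ : Bgrp n, γ ∈ Dgrp n → Even (N1 γ) := by
    intro γ hγ
    rw [Dgrp, Finset.mem_filter] at hγ
    exact hγ.2
  have hmemΔ : ∀ γ : Bgrp n, absLast γ ∈ DeltaSet n := by
    intro γ
    rw [DeltaSet, Finset.mem_filter]
    refine ⟨Finset.mem_univ _, ?_⟩
    unfold wdwN
    rw [dif_pos (by omega : n-1 < n)]
    unfold wdw
    rw [show (absLast γ).2 ⟨n-1, by omega⟩ = false from by
      show (if ((⟨n-1, by omega⟩ : Fin n) : ℕ) = n-1 then false else γ.2 _) = false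
      rw [if_pos rfl]]
    have h0 : (0:ℤ) ≤ (((absLast γ).1 ⟨n-1, by omega⟩ : ℕ) : ℤ) := by positivity
    simp only [Bool.false_eq_true, if_false, one_mul]
    omega
  have hmemD : ∀ δ : Bgrp n, δ ∈ DeltaSet n → fixL δ ∈ Dgrp n := by
    intro δ hδ
    rw [Dgrp, Finset.mem_filter]
    exact ⟨Finset.mem_univ _, fixL_even hn δ (hΔ δ hδ)⟩
  have hDmfix : ∀ δ : Bgrp n, δ ∈ DeltaSet n → Dmaj (fixL δ) = Dmaj δ := by
    intro δ hδ
    unfold Dmaj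
    rw [absLast_fixL hn δ (hΔ δ hδ), absLast_eq_self hn δ (hΔ δ hδ)]
  constructor
  · refine Finset.sum_nbij' (fun δ => fixL δ) (fun γ => absLast γ) ?_ ?_ ?_ ?_ ?_
    · intro δ hδ
      obtain ⟨hδΔ, hδe⟩ := Finset.mem_filter.1 hδ
      exact Finset.mem_filter.2 ⟨hmemD δ hδΔ, (hDmfix δ hδΔ).symm ▸ hδe⟩
    · intro γ hγ
      obtain ⟨hγD, hγe⟩ := Finset.mem_filter.1 hγ
      exact Finset.mem_filter.2 ⟨hmemΔ γ, (dmaj_absLast γ).symm ▸ hγe⟩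
    · intro δ hδ
      exact absLast_fixL hn δ (hΔ δ (Finset.mem_filter.1 hδ).1)
    · intro γ hγ
      exact fixL_absLast hn γ (hDg γ (Finset.mem_filter.1 hγ).1)
    · intro δ hδ
      obtain ⟨hδΔ, hδe⟩ := Finset.mem_filter.1 hδ
      have hf := hΔ δ hδΔ
      have heN : Even (N1 (fixL δ)) := fixL_even hn δ hf
      have habs : absLast (fixL δ) = δ := absLast_fixL hn δ hf
      have hDm : Dmaj (fixL δ) = Dmaj δ := hDmfix δ hδΔ
      have hsign := sign_even hn (fixL δ) heN (hDm.symm ▸ hδe)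
      rw [habs] at hsign
      rw [hDm, polyneg (lenB δ), polyneg (lenD (fixL δ)), hsign]
  · rw [← sum_neg_distrib]
    refine Finset.sum_nbij' (fun δ => fixL δ) (fun γ => absLast γ) ?_ ?_ ?_ ?_ ?_
    · intro δ hδ
      obtain ⟨hδΔ, hδe⟩ := Finset.mem_filter.1 hδ
      exact Finset.mem_filter.2 ⟨hmemD δ hδΔ, (hDmfix δ hδΔ).symm ▸ hδe⟩
    · intro γ hγ
      obtain ⟨hγD, hγe⟩ := Finset.mem_filter.1 hγ
      exact Finset.mem_filter.2 ⟨hmemΔ γ, (dmaj_absLast γ).symm ▸ hγe⟩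
    · intro δ hδ
      exact absLast_fixL hn δ (hΔ δ (Finset.mem_filter.1 hδ).1)
    · intro γ hγ
      exact fixL_absLast hn γ (hDg γ (Finset.mem_filter.1 hγ).1)
    · intro δ hδ
      obtain ⟨hδΔ, hδe⟩ := Finset.mem_filter.1 hδ
      have hf := hΔ δ hδΔ
      have heN : Even (N1 (fixL δ)) := fixL_even hn δ hf
      have habs : absLast (fixL δ) = δ := absLast_fixL hn δ hf
      have hDm : Dmaj (fixL δ) = Dmaj δ := hDmfix δ hδΔ
      have hsign := sign_odd hn (fixL δ) heN (hDm.symm ▸ hδe)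
      rw [habs] at hsign
      rw [hDm, polyneg (lenB δ), polyneg (lenD (fixL δ)), hsign]
      rw [map_neg, neg_mul]
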